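/- arXiv:2207.03167 — 2 statements merged into one kernel-verified Lean document; each statement's English description precedes it below -/
import Mathlib

section
/- Let T be a simplicial tree and (g_n) a sequence of automorphisms such that d(v₀, g_n·v₀) is bounded for some vertex v₀. Then either (a) there is a vertex v, an element g, and a subsequence (g_{n_k}) with g_{n_k} ∈ Stab(v)·g for all k, or (b) there is a subsequence (g_{n_k}), a vertex v, and pairwise distinct edges e_{n_k} adjacent to v such that the geodesics [v₀, g_{n_k}·v₀] all share the common prefix [v₀,v] and continue through the distinct edges e_{n_k}. -/
open SimpleGraph in
lemma step_lemma {V : Type*} (T : SimpleGraph V) (hc : T.Connected) {v q : V}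
    (h : T.dist v q ≠ 0) : ∃ w, T.Adj v w ∧ T.dist w q + 1 = T.dist v q := by
  obtain ⟨p, hp⟩ := SimpleGraph.exists_walk_of_dist_ne_zero h
  cases p with
  | nil => exact absurd (by simp : T.dist v v = 0) h
  | cons hadj p' =>
    rename_i w
    refine ⟨w, hadj, ?_⟩
    have h1 : T.dist w q ≤ p'.length := SimpleGraph.dist_le p'
    have h2 : T.dist v q ≤ T.dist v w + T.dist w q := hc.dist_triangle
    have h3 : T.dist v w = 1 := SimpleGraph.dist_eq_one_iff_adj.mpr hadj
    simp [SimpleGraph.Walk.length_cons] at hp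
    omega

lemma extract_lemma {V : Type*} (S : Set ℕ) (hS : S.Infinite) (f : ℕ → V)
    (hfib : ∀ c, {n | n ∈ S ∧ f n = c}.Finite) :
    ∃ φ : ℕ → ℕ, StrictMono φ ∧ (∀ k, φ k ∈ S) ∧ Function.Injective (f ∘ φ) := by
  classical
  have key : ∀ (m : ℕ) (F : Finset V), ∃ n, n ∈ S ∧ m < n ∧ f n ∉ F := by
    intro m F
    have hfin : (⋃ c ∈ F, {n | n ∈ S ∧ f n = c}).Finite :=
      Set.Finite.biUnion F.finite_toSet fun c _ => hfib c
    obtain ⟨n, hn, hmn⟩ := (hS.diff hfin).exists_gt m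
    refine ⟨n, hn.1, hmn, fun hF => hn.2 ?_⟩
    exact Set.mem_biUnion hF ⟨hn.1, rfl⟩
  choose ch h1 h2 h3 using key
  set aux : ℕ → ℕ × Finset V := fun k => Nat.rec
    (⟨ch 0 ∅, {f (ch 0 ∅)}⟩ : ℕ × Finset V)
    (fun _ q => ⟨ch q.1 q.2, insert (f (ch q.1 q.2)) q.2⟩) k with haux
  have hauxs : ∀ k, aux (k+1) = ⟨ch (aux k).1 (aux k).2,
      insert (f (ch (aux k).1 (aux k).2)) (aux k).2⟩ := fun k => rfl
  set φ : ℕ → ℕ := fun k => (aux k).1 with hφ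
  have hmem : ∀ k, φ k ∈ S := by
    intro k; cases k with
    | zero => exact h1 0 ∅
    | succ k => rw [hφ]; simp only [hauxs]; exact h1 _ _
  have hsm : StrictMono φ := by
    apply strictMono_nat_of_lt_succ
    intro k; rw [hφ]; simp only [hauxs]; exact h2 _ _
  have hin : ∀ j k, j ≤ k → f (φ j) ∈ (aux k).2 := by
    intro j k hjk
    induction k with
    | zero => interval_cases j; exact Finset.mem_singleton_self _
    | succ k ih =>
      rw [hauxs]
      rcases Nat.lt_or_ge j (k+1) with h | h
      · exact Finset.mem_insert_of_mem (ih (by omega))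
      · have : j = k + 1 := by omega
        subst this
        exact Finset.mem_insert_self _ _
  have hnotin : ∀ k, f (φ (k+1)) ∉ (aux k).2 := by
    intro k; rw [hφ]; simp only [hauxs]; exact h3 _ _
  refine ⟨φ, hsm, hmem, ?_⟩
  intro i j hij
  simp only [Function.comp_apply] at hij
  by_contra hne
  wlog hlt : i < j generalizing i j
  · exact this hij.symm (Ne.symm hne) (by omega)
  obtain ⟨m, rfl⟩ : ∃ m, j = m + 1 := ⟨j - 1, by omega⟩
  exact hnotin m (by rw [← hij]; exact hin i m (by omega))

lemma main_lemma {V : Type*} (T : SimpleGraph V) (hc : T.Connected) (p : ℕ → V) (v₀ : V) :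
    ∀ (fuel : ℕ) (v : V) (S : Set ℕ), S.Infinite →
    (∀ n ∈ S, T.dist v₀ v + T.dist v (p n) = T.dist v₀ (p n)) →
    (∀ n ∈ S, T.dist v (p n) ≤ fuel) →
    (∃ v', {n | p n = v'}.Infinite) ∨
    (∃ (φ : ℕ → ℕ) (c : V) (w : ℕ → V), StrictMono φ ∧ Function.Injective w ∧
      (∀ k, T.Adj c (w k)) ∧
      (∀ k, T.dist v₀ c + T.dist c (p (φ k)) = T.dist v₀ (p (φ k))) ∧
      (∀ k, T.dist v₀ (w k) = T.dist v₀ c + 1 ∧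
        T.dist v₀ (w k) + T.dist (w k) (p (φ k)) = T.dist v₀ (p (φ k)))) := by
  intro fuel
  induction fuel with
  | zero =>
    intro v S hS hinv hbd
    left
    refine ⟨v, hS.mono fun n hn => ?_⟩
    have := hbd n hn
    have h0 : T.dist v (p n) = 0 := by omega
    have := (hc.dist_eq_zero_iff (u := v) (v := p n)).mp h0
    exact this.symm
  | succ fuel ih =>
    intro v S hS hinv hbd
    by_cases hS0 : (S ∩ {n | p n = v}).Infinite
    · exact Or.inl ⟨v, hS0.mono fun n hn => hn.2⟩
    · have hS' : (S \ {n | p n = v}).Infinite := by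
        intro hfin
        apply hS
        have h := (Set.not_infinite.mp hS0).union hfin
        rwa [Set.inter_union_diff] at h
      have hstep : ∀ n, ∃ w, n ∈ S \ {n | p n = v} →
          T.Adj v w ∧ T.dist w (p n) + 1 = T.dist v (p n) := by
        intro n
        by_cases hn : n ∈ S \ {n | p n = v}
        · have hne : T.dist v (p n) ≠ 0 := fun h0 =>
            hn.2 ((hc.dist_eq_zero_iff.mp h0).symm)
          obtain ⟨w, hw⟩ := step_lemma T hc hne
          exact ⟨w, fun _ => hw⟩
        · exact ⟨v, fun h => absurd h hn⟩
      choose f hf using hstep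
      -- key distance computation for n in S', for c = f n
      have hcomp : ∀ n ∈ S \ {n | p n = v},
          T.dist v₀ (f n) = T.dist v₀ v + 1 ∧
          T.dist v₀ (f n) + T.dist (f n) (p n) = T.dist v₀ (p n) := by
        intro n hn
        obtain ⟨hadj, hd⟩ := hf n hn
        have t1 : T.dist v₀ (p n) ≤ T.dist v₀ (f n) + T.dist (f n) (p n) :=
          hc.dist_triangle
        have t2 : T.dist v₀ (f n) ≤ T.dist v₀ v + T.dist v (f n) := hc.dist_triangle
        have t3 : T.dist v (f n) = 1 := SimpleGraph.dist_eq_one_iff_adj.mpr hadj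
        have t4 := hinv n hn.1
        omega
      by_cases hfib : ∃ c, {n | n ∈ S \ {n | p n = v} ∧ f n = c}.Infinite
      · obtain ⟨c, hcinf⟩ := hfib
        refine ih c {n | n ∈ S \ {n | p n = v} ∧ f n = c} hcinf ?_ ?_
        · intro n hn
          have := hcomp n hn.1
          obtain ⟨hadj, hd⟩ := hf n hn.1
          rw [← hn.2]
          have t4 := hinv n hn.1.1
          omega
        · intro n hn
          obtain ⟨hadj, hd⟩ := hf n hn.1
          have := hbd n hn.1.1
          rw [← hn.2]
          omega
      · push_neg at hfib
        obtain ⟨φ, hsm, hmemφ, hinj⟩ := extract_lemma _ hS' f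
          (fun c => hfib c)
        right
        refine ⟨φ, v, fun k => f (φ k), hsm, ?_, fun k => (hf _ (hmemφ k)).1,
          fun k => hinv _ (hmemφ k).1, fun k => hcomp _ (hmemφ k)⟩
        intro i j hij
        exact hinj (by simpa using hij)

/-- Small-translation dichotomy: if `d(v₀, gₙ·v₀)` is bounded for a sequence of
automorphisms of a simplicial tree, then either (a) some subsequence lies in a
single coset `Stab(v)·h` of a vertex stabilizer, or (b) there are a subsequence
`g (φ k)`, a vertex `v` and pairwise distinct edges `{v, w k}` adjacent to `v`
such that every geodesic `[v₀, g (φ k)·v₀]` passes through `v` (common prefix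
`[v₀,v]`) and continues through the edge `{v, w k}`. -/
theorem stmt13 {V G : Type*} [Group G] (T : SimpleGraph V) (hT : T.IsTree)
    (ρ : G →* Equiv.Perm V)
    (hρ : ∀ (g : G) (a b : V), T.Adj a b → T.Adj (ρ g a) (ρ g b))
    (g : ℕ → G) (v₀ : V)
    (hbd : ∃ B : ℕ, ∀ n, T.dist v₀ (ρ (g n) v₀) ≤ B) :
    (∃ (v : V) (h : G) (φ : ℕ → ℕ), StrictMono φ ∧
        ∀ k, ρ (g (φ k) * h⁻¹) v = v) ∨
      (∃ (φ : ℕ → ℕ) (v : V) (w : ℕ → V), StrictMono φ ∧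
        Function.Injective w ∧ (∀ k, T.Adj v (w k)) ∧
        (∀ k, T.dist v₀ v + T.dist v (ρ (g (φ k)) v₀)
            = T.dist v₀ (ρ (g (φ k)) v₀)) ∧
        (∀ k, T.dist v₀ (w k) = T.dist v₀ v + 1 ∧
          T.dist v₀ (w k) + T.dist (w k) (ρ (g (φ k)) v₀)
            = T.dist v₀ (ρ (g (φ k)) v₀))) := by
  obtain ⟨B, hB⟩ := hbd
  have hc : T.Connected := hT.isConnected
  have hmain := main_lemma T hc (fun n => ρ (g n) v₀) v₀ B v₀ Set.univ
    Set.infinite_univ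
    (fun n _ => by simp [SimpleGraph.dist_self])
    (fun n _ => hB n)
  rcases hmain with ⟨v', hinf⟩ | ⟨φ, c, w, hsm, hinj, hadj, hpre, hed⟩
  · left
    have hsm : StrictMono (Nat.nth (fun n => ρ (g n) v₀ = v')) :=
      Nat.nth_strictMono hinf
    have hmem : ∀ k, ρ (g (Nat.nth (fun n => ρ (g n) v₀ = v') k)) v₀ = v' :=
      fun k => Nat.nth_mem_of_infinite hinf k
    refine ⟨v', g (Nat.nth (fun n => ρ (g n) v₀ = v') 0), _, hsm, fun k => ?_⟩
    have h0 : (ρ (g (Nat.nth (fun n => ρ (g n) v₀ = v') 0)))⁻¹ v' = v₀ := by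
      rw [Equiv.Perm.inv_def, Equiv.symm_apply_eq]
      exact (hmem 0).symm
    rw [map_mul, map_inv, Equiv.Perm.mul_apply, h0]
    exact hmem k
  · exact Or.inr ⟨φ, c, w, hsm, hinj, hadj, hpre, hed⟩
end

section
/- Let G be a group acting as a convergence group on a compact metrizable space X, and suppose g ∈ G has infinite order and fixes a point p ∈ X that is not a conical limit point of the action, with g contained in a subgroup having no loxodromic elements. Then for any sequence (g_n = gⁿ), the translates g_n·y converge to p for all y in X apart from at most one exceptional point; i.e., a parabolic fixed point attracts under powers of parabolic elements. -/
open Filter Topology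

/-- A convergence action of `G` on `X`. -/
def IsConvergenceAction (G X : Type*) [Group G] [MulAction G X]
    [TopologicalSpace X] : Prop :=
  ∀ g : ℕ → G, Function.Injective g →
    ∃ φ : ℕ → ℕ, StrictMono φ ∧ ∃ x y : X,
      ∀ K : Set X, IsCompact K → K ⊆ {y}ᶜ →
        ∀ U ∈ 𝓝 x, ∀ᶠ k in atTop, (fun p => g (φ k) • p) '' K ⊆ U

/-- `g` is loxodromic: infinite order with exactly two fixed points in `X`. -/
def IsLoxodromic {G : Type*} (X : Type*) [Group G] [MulAction G X] (g : G) : Prop :=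
  ¬ IsOfFinOrder g ∧ ∃ a b : X, a ≠ b ∧ {x : X | g • x = x} = {a, b}

/-- `x` is a conical limit point for the elements of `S ⊆ G` acting on `X`. -/
def IsConicalLimitPoint {G X : Type*} [Group G] [MulAction G X]
    [TopologicalSpace X] (S : Set G) (x : X) : Prop :=
  ∃ g : ℕ → G, (∀ n, g n ∈ S) ∧ ∃ z y : X, z ≠ y ∧
    Tendsto (fun n => g n • x) atTop (𝓝 z) ∧
    ∀ x' : X, x' ≠ x → Tendsto (fun n => g n • x') atTop (𝓝 y)

/-- Pointwise convergence extracted from the uniform-on-compacts property. -/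
lemma aux_pt {G X : Type*} [Group G] [MulAction G X] [TopologicalSpace X]
    {h : ℕ → G} {a b : X}
    (H : ∀ K : Set X, IsCompact K → K ⊆ {b}ᶜ → ∀ U ∈ 𝓝 a,
      ∀ᶠ k in atTop, (fun q => h k • q) '' K ⊆ U)
    {x : X} (hx : x ≠ b) : Tendsto (fun k => h k • x) atTop (𝓝 a) := by
  rw [Filter.tendsto_def]
  intro U hU
  have h1 := H {x} isCompact_singleton (by simpa using hx.symm) U hU
  filter_upwards [h1] with k hk
  exact hk ⟨x, rfl, rfl⟩

/-- The uniform-on-compacts property passes to subsequences. -/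
lemma aux_sub {G X : Type*} [Group G] [MulAction G X] [TopologicalSpace X]
    {h : ℕ → G} {a b : X}
    (H : ∀ K : Set X, IsCompact K → K ⊆ {b}ᶜ → ∀ U ∈ 𝓝 a,
      ∀ᶠ k in atTop, (fun q => h k • q) '' K ⊆ U)
    {ρ : ℕ → ℕ} (hρ : StrictMono ρ) :
    ∀ K : Set X, IsCompact K → K ⊆ {b}ᶜ → ∀ U ∈ 𝓝 a,
      ∀ᶠ k in atTop, (fun q => h (ρ k) • q) '' K ⊆ U :=
  fun K hK hKb U hU => hρ.tendsto_atTop.eventually (H K hK hKb U hU)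

/-- Parabolic fixed points attract under powers of parabolic elements: if `g`
has infinite order, fixes a point `p` which is not a conical limit point, and
lies in a subgroup with no loxodromic elements, then the translates `gⁿ·y`
converge to `p` for all `y ∈ X` apart from at most one exceptional point. -/
theorem stmt15 {G X : Type*} [Group G] [TopologicalSpace X] [CompactSpace X]
    [TopologicalSpace.MetrizableSpace X] [MulAction G X]
    (hconv : IsConvergenceAction G X)
    (g : G) (hg : ¬ IsOfFinOrder g) (p : X) (hfix : g • p = p)
    (hnc : ¬ IsConicalLimitPoint (Set.univ : Set G) p)
    (P : Subgroup G) (hgP : g ∈ P) (hP : ∀ h ∈ P, ¬ IsLoxodromic X h) :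
    ∃ w : X, ∀ y : X, y ≠ w → Tendsto (fun n : ℕ => g ^ n • y) atTop (𝓝 p) := by
  classical
  have hfixpow : ∀ n : ℕ, g ^ n • p = p := by
    intro n
    induction n with
    | zero => simp
    | succ n ih => rw [pow_succ, mul_smul, hfix, ih]
  have hfixinv : ∀ n : ℕ, (g ^ n)⁻¹ • p = p := by
    intro n
    conv_lhs => rw [← hfixpow n]
    exact inv_smul_smul _ _
  have hpowinj : Function.Injective fun n : ℕ => g ^ n :=
    injective_pow_iff_not_isOfFinOrder.mpr hg
  by_cases hbig : ∃ c₁ c₂ : X, c₁ ≠ c₂ ∧ c₁ ≠ p ∧ c₂ ≠ p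
  · -- main case: `X` has at least two points different from `p`;
    -- we show that in fact every point converges to `p`.
    refine ⟨p, fun y _ => ?_⟩
    by_contra hy
    -- a neighbourhood witnessing failure, infinitely often
    have hex : ∃ U ∈ 𝓝 p, {n : ℕ | g ^ n • y ∉ U}.Infinite := by
      rw [Filter.tendsto_def] at hy
      push_neg at hy
      obtain ⟨U, hU, hmem⟩ := hy
      refine ⟨U, hU, ?_⟩
      rw [← Nat.frequently_atTop_iff_infinite]
      exact Filter.not_eventually.mp hmem
    obtain ⟨U₀, hU₀, hNinf⟩ := hex
    set Npred : ℕ → Prop := fun n => g ^ n • y ∉ U₀ with hNpred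
    have hNinf' : (setOf Npred).Infinite := hNinf
    set e : ℕ → ℕ := Nat.nth Npred with he
    have he_mono : StrictMono e := Nat.nth_strictMono hNinf'
    have he_mem : ∀ k, g ^ e k • y ∉ U₀ := fun k => Nat.nth_mem_of_infinite hNinf' k
    -- apply the convergence property to the failing subsequence
    obtain ⟨φ, hφ, a, b, hab⟩ := hconv (fun j => g ^ e j) (hpowinj.comp he_mono.injective)
    set θ : ℕ → ℕ := fun j => e (φ j) with hθ
    have hθmono : StrictMono θ := he_mono.comp hφ
    have Hθ : ∀ K : Set X, IsCompact K → K ⊆ {b}ᶜ → ∀ U ∈ 𝓝 a,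
        ∀ᶠ k in atTop, (fun q => g ^ θ k • q) '' K ⊆ U := hab
    have hθ_mem : ∀ k, g ^ θ k • y ∉ U₀ := fun k => he_mem (φ k)
    have hyp : y ≠ p := by
      rintro rfl
      exact hθ_mem 0 (by rw [hfixpow]; exact mem_of_mem_nhds hU₀)
    -- the repelling point is not p, and the attracting point is p
    have hbp : b ≠ p := by
      rintro rfl
      -- then every point other than p converges to a; a ≠ p since y fails
      have hya : Tendsto (fun k => g ^ θ k • y) atTop (𝓝 a) := aux_pt Hθ hyp
      have hap : a ≠ b := by
        rintro rfl
        obtain ⟨k, hk⟩ := (hya.eventually_mem hU₀).exists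
        exact hθ_mem k hk
      exact hnc ⟨fun k => g ^ θ k, fun _ => trivial, b, a, hap.symm,
        by simpa [hfixpow] using (tendsto_const_nhds : Tendsto (fun _ : ℕ => b) atTop (𝓝 b)),
        fun x' hx' => aux_pt Hθ hx'⟩
    have hap : a = p := by
      have h1 : Tendsto (fun k => g ^ θ k • p) atTop (𝓝 a) :=
        aux_pt Hθ (fun h => hbp h.symm)
      have h2 : Tendsto (fun k => g ^ θ k • p) atTop (𝓝 p) := by
        simpa [hfixpow] using (tendsto_const_nhds : Tendsto (fun _ : ℕ => p) atTop (𝓝 p))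
      exact tendsto_nhds_unique h1 h2
    have hby : b = y := by
      by_contra hne
      have : Tendsto (fun k => g ^ θ k • y) atTop (𝓝 a) := aux_pt Hθ (fun h => hne h.symm)
      rw [hap] at this
      obtain ⟨k, hk⟩ := (this.eventually_mem hU₀).exists
      exact hθ_mem k hk
    rw [hap, hby] at Hθ
    -- now apply the convergence property to the inverse sequence
    obtain ⟨ρ, hρ, a', b', hab'⟩ := hconv (fun k => (g ^ θ k)⁻¹)
      (fun i j hij => hθmono.injective (hpowinj (inv_injective hij)))
    set ψ : ℕ → ℕ := fun k => θ (ρ k) with hψ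
    have Hinv : ∀ K : Set X, IsCompact K → K ⊆ {b'}ᶜ → ∀ V ∈ 𝓝 a',
        ∀ᶠ k in atTop, (fun q => (g ^ ψ k)⁻¹ • q) '' K ⊆ V := hab'
    have Hfwd : ∀ K : Set X, IsCompact K → K ⊆ {y}ᶜ → ∀ U ∈ 𝓝 p,
        ∀ᶠ k in atTop, (fun q => g ^ ψ k • q) '' K ⊆ U := aux_sub Hθ hρ
    obtain ⟨c₁, c₂, h12, h1p, h2p⟩ := hbig
    -- the attracting point of the inverse sequence is y
    have ha'y : a' = y := by
      by_contra hne
      have hxall : ∀ x : X, x ≠ b' → x = p := by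
        intro x hxb'
        obtain ⟨K, hKc, hKint, hKsub⟩ := exists_compact_subset
          (isOpen_compl_singleton : IsOpen ({y}ᶜ : Set X)) (by simpa using hne)
        have h1 : ∀ᶠ k in atTop, (g ^ ψ k)⁻¹ • x ∈ K :=
          (aux_pt Hinv hxb').eventually_mem (mem_interior_iff_mem_nhds.mp hKint)
        have hxp : Tendsto (fun _ : ℕ => x) atTop (𝓝 p) := by
          rw [Filter.tendsto_def]
          intro U hU
          filter_upwards [h1, Hfwd K hKc hKsub U hU] with k hk1 hk2
          have : g ^ ψ k • ((g ^ ψ k)⁻¹ • x) ∈ U := hk2 ⟨_, hk1, rfl⟩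
          simpa [smul_inv_smul] using this
        exact tendsto_nhds_unique tendsto_const_nhds hxp
      rcases eq_or_ne c₁ b' with rfl | hne1
      · exact h2p (hxall c₂ (fun hh => h12 hh.symm))
      · exact h1p (hxall c₁ hne1)
    -- case analysis on the repelling point of the inverse sequence
    by_cases hb'p : b' = p
    · -- p would be a conical limit point
      rw [hb'p] at Hinv
      refine hnc ⟨fun k => (g ^ ψ k)⁻¹, fun _ => trivial, p, y, hyp.symm, ?_, ?_⟩
      · simpa [hfixinv] using (tendsto_const_nhds : Tendsto (fun _ : ℕ => p) atTop (𝓝 p))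
      · intro x' hx'
        have := aux_pt Hinv hx'
        rwa [ha'y] at this
    · -- composing forwards and backwards shows every point other than y equals a'
      obtain ⟨K, hKc, hKint, hKsub⟩ := exists_compact_subset
        (isOpen_compl_singleton : IsOpen ({b'}ᶜ : Set X))
        (by simpa using (fun h => hb'p h.symm : p ≠ b'))
      have hxall : ∀ x : X, x ≠ y → x = a' := by
        intro x hxy
        have h1 : ∀ᶠ k in atTop, g ^ ψ k • x ∈ K :=
          (aux_pt Hfwd hxy).eventually_mem (mem_interior_iff_mem_nhds.mp hKint)
        have hxa' : Tendsto (fun _ : ℕ => x) atTop (𝓝 a') := by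
          rw [Filter.tendsto_def]
          intro V hV
          filter_upwards [h1, Hinv K hKc hKsub V hV] with k hk1 hk2
          have : (g ^ ψ k)⁻¹ • (g ^ ψ k • x) ∈ V := hk2 ⟨_, hk1, rfl⟩
          simpa [inv_smul_smul] using this
        exact tendsto_nhds_unique tendsto_const_nhds hxa'
      have hpa' : p = a' := hxall p (fun h => hyp h.symm)
      rcases eq_or_ne c₁ y with rfl | hne1
      · have hd : c₂ = a' := hxall c₂ (fun hh => h12 hh.symm)
        exact h2p (hd.trans hpa'.symm)
      · have hd : c₁ = a' := hxall c₁ hne1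
        exact h1p (hd.trans hpa'.symm)
  · -- degenerate case: at most one point differs from p
    by_cases hq : ∃ q : X, q ≠ p
    · obtain ⟨q, hq⟩ := hq
      refine ⟨q, fun y hyq => ?_⟩
      have hyp : y = p := by
        by_contra hyp
        exact hbig ⟨y, q, hyq, hyp, hq⟩
      subst hyp
      simpa [hfixpow] using (tendsto_const_nhds : Tendsto (fun _ : ℕ => y) atTop (𝓝 y))
    · push_neg at hq
      exact ⟨p, fun y hy => absurd (hq y) hy⟩
end
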